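/- Let G1, …, Gk be connected nontrivial graphs such that a'(Gi) = Δ(Gi) for each i and max_i a'(Gi) > 1. Then a'(G1 □ ⋯ □ Gk) = Δ(G1 □ ⋯ □ Gk) = Δ(G1) + ⋯ + Δ(Gk). -/

import Mathlib

open SimpleGraph

/-- An edge colouring of `G` is proper if distinct edges sharing a vertex
receive distinct colours. -/
def IsProperEdgeColoring {V : Type*} {γ : Type*} (G : SimpleGraph V) (c : Sym2 V → γ) : Prop :=
  ∀ e₁ ∈ G.edgeSet, ∀ e₂ ∈ G.edgeSet, e₁ ≠ e₂ → (∃ v, v ∈ e₁ ∧ v ∈ e₂) → c e₁ ≠ c e₂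

/-- The subgraph of `G` formed by the union of the colour classes `a` and `b`. -/
def twoColourSubgraph {V : Type*} {γ : Type*} (G : SimpleGraph V) (c : Sym2 V → γ)
    (a b : γ) : SimpleGraph V where
  Adj x y := G.Adj x y ∧ (c s(x, y) = a ∨ c s(x, y) = b)
  symm := ⟨fun x y h => ⟨h.1.symm, by rw [Sym2.eq_swap]; exact h.2⟩⟩
  loopless := ⟨fun x h => G.ne_of_adj h.1 rfl⟩

/-- A proper edge colouring is acyclic if the union of any two colour classes
is a forest. -/
def IsAcyclicEdgeColoring {V : Type*} {γ : Type*} (G : SimpleGraph V) (c : Sym2 V → γ) : Prop :=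
  IsProperEdgeColoring G c ∧ ∀ a b : γ, (twoColourSubgraph G c a b).IsAcyclic

/-- The acyclic chromatic index `a'(G)`: the least number of colours in an
acyclic proper edge colouring of `G`. -/
noncomputable def acyclicChromaticIndex {V : Type*} (G : SimpleGraph V) : ℕ :=
  sInf { n | ∃ c : Sym2 V → Fin n, IsAcyclicEdgeColoring G c }

/-- The cartesian (box) product of a family of graphs: two tuples are adjacent
iff they differ in exactly one coordinate, and are adjacent there. -/
def piBoxProd {ι : Type*} {V : ι → Type*} (G : ∀ i, SimpleGraph (V i)) :
    SimpleGraph (∀ i, V i) where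
  Adj x y := ∃ i, (G i).Adj (x i) (y i) ∧ ∀ j, j ≠ i → x j = y j
  symm := ⟨fun x y => by
    rintro ⟨i, h, hj⟩
    exact ⟨i, h.symm, fun j hji => (hj j hji).symm⟩⟩
  loopless := ⟨fun x => by
    rintro ⟨i, h, -⟩
    exact (G i).ne_of_adj h rfl⟩


open SimpleGraph

lemma no_closed_trail {V : Type*} {F : SimpleGraph V} (hF : F.IsAcyclic) {v : V}
    (q : F.Walk v v) (ht : q.IsTrail) (hq : q ≠ SimpleGraph.Walk.nil) : False := by
  cases q with
  | nil => exact hq rfl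
  | cons h p =>
    have hb := (isAcyclic_iff_forall_adj_isBridge.mp hF) h
    rw [isBridge_iff_adj_and_forall_walk_mem_edges] at hb
    have hmem := hb p.reverse
    rw [Walk.edges_reverse, List.mem_reverse] at hmem
    have := ht.edges_nodup
    rw [Walk.edges_cons, List.nodup_cons] at this
    exact this.1 hmem

open scoped Classical in
noncomputable def projE {X Y : Type*} (f : X → Y) : Sym2 X → Option (Sym2 Y) :=
  Sym2.lift ⟨fun a b => if f a = f b then none else some s(f a, f b), by
    intro a b
    by_cases h : f a = f b
    · simp only [if_pos h, if_pos h.symm]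
    · simp only [if_neg h, if_neg (Ne.symm h), Sym2.eq_swap]⟩

lemma projE_eq_none {X Y : Type*} {f : X → Y} {a b : X} (h : projE f s(a, b) = none) :
    f a = f b := by
  by_contra hne
  simp only [projE, Sym2.lift_mk, if_neg hne] at h
  exact Option.some_ne_none _ h

lemma projE_eq_some {X Y : Type*} {f : X → Y} {a b : X} {e : Sym2 Y}
    (h : projE f s(a, b) = some e) : f a ≠ f b ∧ e = s(f a, f b) := by
  by_cases hne : f a = f b
  · simp only [projE, Sym2.lift_mk, if_pos hne] at h
    exact absurd h (by simp)
  · simp only [projE, Sym2.lift_mk, if_neg hne, Option.some.injEq] at h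
    exact ⟨hne, h.symm⟩

lemma master_supp {X : Type*} {S : SimpleGraph X} {P : X → Prop}
    (hP : ∀ {x y}, S.Adj x y → P x → P y) :
    ∀ {x y} (p : S.Walk x y), P x → ∀ z ∈ p.support, P z := by
  intro x y p
  induction p with
  | nil => intro hx z hz; rw [Walk.support_nil, List.mem_singleton] at hz; exact hz ▸ hx
  | cons h p ih =>
    intro hx z hz
    rw [Walk.support_cons, List.mem_cons] at hz
    rcases hz with rfl | hz
    · exact hx
    · exact ih (hP h hx) z hz

lemma master_proj {X Y : Type*} {S : SimpleGraph X} {F : SimpleGraph Y} {f : X → Y}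
    {P : X → Prop}
    (hP : ∀ {x y}, S.Adj x y → P x → P y)
    (hadj : ∀ {x y}, S.Adj x y → P x → f x = f y ∨ F.Adj (f x) (f y)) :
    ∀ {x y} (p : S.Walk x y), P x →
      ∃ q : F.Walk (f x) (f y), q.edges = p.edges.filterMap (projE f) := by
  intro x y p
  induction p with
  | nil => intro _; exact ⟨Walk.nil, by simp⟩
  | cons h p ih =>
    rename_i u v w
    intro hx
    obtain ⟨q, hq⟩ := ih (hP h hx)
    rcases hadj h hx with heq | hadj'
    · refine ⟨q.copy heq.symm rfl, ?_⟩
      rw [Walk.edges_copy, hq, Walk.edges_cons, List.filterMap_cons]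
      have hnone : projE f s(u, v) = none := by
        simp only [projE, Sym2.lift_mk, if_pos heq]
      rw [hnone]
    · refine ⟨Walk.cons hadj' q, ?_⟩
      rw [Walk.edges_cons, Walk.edges_cons, List.filterMap_cons, hq]
      have hsome : projE f s(u, v) = some s(f u, f v) := by
        simp only [projE, Sym2.lift_mk, if_neg hadj'.ne]
      rw [hsome]

lemma nodup_filterMap {A B : Type*} (g : A → Option B) :
    ∀ (l : List A), l.Nodup →
      (∀ a ∈ l, ∀ a' ∈ l, ∀ b, g a = some b → g a' = some b → a = a') →
      (l.filterMap g).Nodup := by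
  intro l
  induction l with
  | nil => simp
  | cons a l ih =>
    intro hn hinj
    rw [List.filterMap_cons]
    rcases hg : g a with _ | b
    · exact ih (List.nodup_cons.mp hn).2
        (fun a' ha' a'' ha'' => hinj _ (List.mem_cons_of_mem _ ha') _ (List.mem_cons_of_mem _ ha''))
    · rw [List.nodup_cons]
      constructor
      · intro hb
        obtain ⟨a', ha', hga'⟩ := List.mem_filterMap.mp hb
        have : a = a' := hinj a (List.mem_cons_self) a' (List.mem_cons_of_mem _ ha') b hg hga'
        exact (List.nodup_cons.mp hn).1 (this ▸ ha')
      · exact ih (List.nodup_cons.mp hn).2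
          (fun _ h1 _ h2 => hinj _ (List.mem_cons_of_mem _ h1) _ (List.mem_cons_of_mem _ h2))

lemma master {X Y : Type*} {S : SimpleGraph X} {F : SimpleGraph Y} (f : X → Y)
    (P : X → Prop)
    (hP : ∀ {x y}, S.Adj x y → P x → P y)
    (hadj : ∀ {x y}, S.Adj x y → P x → f x = f y ∨ F.Adj (f x) (f y))
    (hinj : ∀ {x x' y y'}, S.Adj x x' → S.Adj y y' → P x → P y → f x ≠ f x' → f y ≠ f y' →
      s(f x, f x') = s(f y, f y') → s(x, x') = s(y, y'))
    (huniq : ∀ {x y z}, S.Adj x y → S.Adj y z → P x → f x = f y → f y = f z → x = z)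
    (hF : F.IsAcyclic) {x0 : X} (hx0 : P x0) (c : S.Walk x0 x0) : ¬ c.IsCycle := by
  intro hc
  by_cases hnil : c.edges.filterMap (projE f) = []
  · have hall : ∀ e ∈ c.edges, projE f e = none := by
      rwa [List.filterMap_eq_nil_iff] at hnil
    cases c with
    | nil => exact hc.ne_nil rfl
    | cons h1 rest =>
      rename_i x1
      cases rest with
      | nil => simpa using hc.three_le_length
      | cons h2 p2 =>
        rename_i x2
        have e1 : f x0 = f x1 :=
          projE_eq_none (hall _ (by rw [Walk.edges_cons]; exact List.mem_cons_self))
        have e2 : f x1 = f x2 := by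
          refine projE_eq_none (hall _ ?_)
          rw [Walk.edges_cons, Walk.edges_cons]
          exact List.mem_cons_of_mem _ (List.mem_cons_self)
        have hx02 : x0 = x2 := huniq h1 h2 hx0 e1 e2
        have hnd := hc.edges_nodup
        rw [Walk.edges_cons, Walk.edges_cons, List.nodup_cons] at hnd
        apply hnd.1
        rw [List.mem_cons]
        left
        rw [← hx02, Sym2.eq_swap]
  · obtain ⟨q, hq⟩ := master_proj hP hadj c hx0
    have hsupp := master_supp hP c hx0
    have ht : q.IsTrail := by
      constructor
      rw [hq]
      refine nodup_filterMap _ _ hc.edges_nodup ?_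
      intro a ha a' ha' b hb hb'
      induction a with
      | h x x' =>
        induction a' with
        | h y y' =>
          obtain ⟨hne, rfl⟩ := projE_eq_some hb
          obtain ⟨hne', hb2⟩ := projE_eq_some hb'
          have hAdj : S.Adj x x' := (S.mem_edgeSet).mp (c.edges_subset_edgeSet ha)
          have hAdj' : S.Adj y y' := (S.mem_edgeSet).mp (c.edges_subset_edgeSet ha')
          have hPx : P x := hsupp _ (Walk.fst_mem_support_of_mem_edges c ha)
          have hPy : P y := hsupp _ (Walk.fst_mem_support_of_mem_edges c ha')
          exact hinj hAdj hAdj' hPx hPy hne hne' hb2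
    exact no_closed_trail hF q ht (fun h => hnil (by rw [← hq, h, Walk.edges_nil]))

lemma isAcyclic_of_le {V : Type*} {A B : SimpleGraph V} (h : A ≤ B) (hB : B.IsAcyclic) :
    A.IsAcyclic := by
  intro v c
  refine master (S := A) (F := B) id (fun _ => True) (fun _ _ => trivial)
    (fun ha _ => Or.inr (h ha)) (fun _ _ _ _ _ _ he => he) ?_ hB trivial c
  intro x y z hxy _ _ hf _
  exact ((show x ≠ y from hxy.ne) hf).elim

lemma isAcyclicEdgeColoring_equiv {V γ δ : Type*} {G : SimpleGraph V} {c : Sym2 V → γ}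
    (hc : IsAcyclicEdgeColoring G c) (ι : γ ≃ δ) :
    IsAcyclicEdgeColoring G (fun e => ι (c e)) := by
  constructor
  · intro e1 he1 e2 he2 hne hshare h
    exact hc.1 e1 he1 e2 he2 hne hshare (ι.injective h)
  · intro a b
    have hgr : twoColourSubgraph G (fun e => ι (c e)) a b
        = twoColourSubgraph G c (ι.symm a) (ι.symm b) := by
      ext x y
      show G.Adj x y ∧ _ ↔ G.Adj x y ∧ _
      constructor
      · rintro ⟨hadj, h | h⟩
        · exact ⟨hadj, Or.inl (by rw [← h, Equiv.symm_apply_apply])⟩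
        · exact ⟨hadj, Or.inr (by rw [← h, Equiv.symm_apply_apply])⟩
      · rintro ⟨hadj, h | h⟩
        · exact ⟨hadj, Or.inl (show ι _ = a by rw [h, Equiv.apply_symm_apply])⟩
        · exact ⟨hadj, Or.inr (show ι _ = b by rw [h, Equiv.apply_symm_apply])⟩
    rw [hgr]
    exact hc.2 _ _

lemma isAcyclicEdgeColoring_of_iso {X Y γ : Type*} {A : SimpleGraph X} {B : SimpleGraph Y}
    (e : X ≃ Y) (hAdj : ∀ x x', A.Adj x x' ↔ B.Adj (e x) (e x'))
    {cB : Sym2 Y → γ} (hc : IsAcyclicEdgeColoring B cB) :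
    IsAcyclicEdgeColoring A (fun s => cB (Sym2.map e s)) := by
  have hmapinj : Function.Injective (Sym2.map e) := Sym2.map.injective e.injective
  have hedge : ∀ {s : Sym2 X}, s ∈ A.edgeSet → Sym2.map e s ∈ B.edgeSet := by
    intro s hs
    induction s with
    | h x x' =>
      rw [Sym2.map_pair_eq, B.mem_edgeSet]
      exact (hAdj x x').mp (A.mem_edgeSet.mp hs)
  constructor
  · intro e1 he1 e2 he2 hne hshare h
    refine hc.1 _ (hedge he1) _ (hedge he2) (fun hh => hne (hmapinj hh)) ?_ h
    obtain ⟨v, h1, h2⟩ := hshare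
    exact ⟨e v, Sym2.mem_map.mpr ⟨v, h1, rfl⟩, Sym2.mem_map.mpr ⟨v, h2, rfl⟩⟩
  · intro a b
    intro v c
    refine master (S := twoColourSubgraph A (fun s => cB (Sym2.map e s)) a b)
      (F := twoColourSubgraph B cB a b) e (fun _ => True) (fun _ _ => trivial)
      ?_ ?_ ?_ (hc.2 a b) trivial c
    · intro x y hxy _
      refine Or.inr ⟨(hAdj x y).mp hxy.1, ?_⟩
      have hswap : Sym2.map e s(x, y) = s(e x, e y) := Sym2.map_pair_eq e x y
      rw [← hswap]
      exact hxy.2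
    · intro x x' y y' _ _ _ _ _ _ he
      apply hmapinj
      rw [Sym2.map_pair_eq, Sym2.map_pair_eq]
      exact he
    · intro x y z hxy _ _ hf _
      exact absurd (e.injective hf) hxy.1.ne

lemma maxDegree_le_of_proper {V : Type*} [Fintype V] {G : SimpleGraph V}
    [inst : DecidableRel G.Adj] {n : ℕ} {c : Sym2 V → Fin n}
    (hc : IsProperEdgeColoring G c) : G.maxDegree ≤ n := by
  apply maxDegree_le_of_forall_degree_le
  intro v
  have hinj : Set.InjOn (fun w => c s(v, w)) (G.neighborFinset v : Set V) := by
    intro w1 h1 w2 h2 hcc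
    by_contra hne
    have a1 : G.Adj v w1 := by rwa [Finset.mem_coe, mem_neighborFinset] at h1
    have a2 : G.Adj v w2 := by rwa [Finset.mem_coe, mem_neighborFinset] at h2
    refine hc s(v, w1) (G.mem_edgeSet.mpr a1) s(v, w2) (G.mem_edgeSet.mpr a2) ?_
      ⟨v, Sym2.mem_mk_left v w1, Sym2.mem_mk_left v w2⟩ hcc
    intro hh
    exact hne (Sym2.congr_right.mp hh)
  calc G.degree v = (G.neighborFinset v).card := rfl
    _ ≤ (Finset.univ : Finset (Fin n)).card :=
        Finset.card_le_card_of_injOn _ (fun x _ => Finset.mem_univ _) hinj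
    _ = n := by simp

lemma one_le_maxDegree_of_connected {V : Type*} [Fintype V] [Nontrivial V]
    {G : SimpleGraph V} [inst : DecidableRel G.Adj] (hc : G.Connected) :
    1 ≤ G.maxDegree := by
  obtain ⟨v, w, hvw⟩ := exists_pair_ne V
  obtain ⟨p⟩ := hc.preconnected v w
  cases p with
  | nil => exact absurd rfl hvw
  | cons h _ =>
    calc 1 ≤ G.degree v := by
          rw [Nat.succ_le_iff]
          exact (G.degree_pos_iff_exists_adj v).mpr ⟨_, h⟩
      _ ≤ G.maxDegree := G.degree_le_maxDegree v

lemma exists_coloring_of_aci_eq {V : Type*} {G : SimpleGraph V} {d : ℕ}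
    (h : acyclicChromaticIndex G = d) (hd : 0 < d) :
    ∃ c : Sym2 V → Fin d, IsAcyclicEdgeColoring G c := by
  have hne : { n | ∃ c : Sym2 V → Fin n, IsAcyclicEdgeColoring G c }.Nonempty := by
    by_contra hempty
    rw [Set.not_nonempty_iff_eq_empty] at hempty
    rw [acyclicChromaticIndex, hempty, Nat.sInf_empty] at h
    omega
  have := Nat.sInf_mem hne
  rw [acyclicChromaticIndex] at h
  rwa [h] at this

noncomputable def greedyAux {W : Type*} [Fintype W] [DecidableEq W] (H : SimpleGraph W)
    [DecidableRel H.Adj] (μ : W → ℕ) {a : ℕ} (ha : 0 < a) : ℕ → W → Fin a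
  | 0 => fun _ => ⟨0, ha⟩
  | (n+1) => fun v =>
      if μ v = n then
        if h : (Finset.univ \ ((H.neighborFinset v).filter
            (fun u => μ u < μ v)).image (greedyAux H μ ha n)).Nonempty then h.choose
        else ⟨0, ha⟩
      else greedyAux H μ ha n v

lemma greedyAux_succ {W : Type*} [Fintype W] [DecidableEq W] (H : SimpleGraph W)
    [DecidableRel H.Adj] (μ : W → ℕ) {a : ℕ} (ha : 0 < a) (n : ℕ) (v : W) :
    greedyAux H μ ha (n+1) v =
      if μ v = n then
        if h : (Finset.univ \ ((H.neighborFinset v).filter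
            (fun u => μ u < μ v)).image (greedyAux H μ ha n)).Nonempty then h.choose
        else ⟨0, ha⟩
      else greedyAux H μ ha n v := rfl

lemma exists_proper_vertex_coloring {W : Type*} [Fintype W] {H : SimpleGraph W}
    [DecidableRel H.Adj] (hconn : H.Connected) {a : ℕ}
    (hdeg : ∀ v, H.degree v ≤ a) (hlt : ∃ v, H.degree v < a) :
    ∃ g : W → Fin a, ∀ ⦃v w⦄, H.Adj v w → g v ≠ g w := by
  classical
  obtain ⟨v0, hv0⟩ := hlt
  have ha : 0 < a := lt_of_le_of_lt (Nat.zero_le _) hv0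
  set N := Fintype.card W with hN
  have hNpos : 0 < N := Fintype.card_pos_iff.mpr ⟨v0⟩
  set μ : W → ℕ := fun v => (N + 1) * (N - H.dist v0 v) + (Fintype.equivFin W v : ℕ) with hμ
  have hdistlt : ∀ v, H.dist v0 v < N := by
    intro v
    obtain ⟨p, _⟩ := hconn.exists_walk_length_eq_dist v0 v
    calc H.dist v0 v ≤ p.bypass.length := dist_le p.bypass
      _ < N := p.bypass_isPath.length_lt
  have hsplit : ∀ x y i j : ℕ, i < N+1 → j < N+1 → (N+1)*x + i = (N+1)*y + j →
      i = j ∧ x = y := by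
    intro x y i j hi hj h
    rcases lt_trichotomy x y with hxy | hxy | hxy
    · exfalso
      have h1 : (N+1)*(x+1) ≤ (N+1)*y := Nat.mul_le_mul_left _ (by omega)
      have h2 : (N+1)*(x+1) = (N+1)*x + (N+1) := by ring
      omega
    · subst hxy; omega
    · exfalso
      have h1 : (N+1)*(y+1) ≤ (N+1)*x := Nat.mul_le_mul_left _ (by omega)
      have h2 : (N+1)*(y+1) = (N+1)*y + (N+1) := by ring
      omega
  have hμinj : Function.Injective μ := by
    intro u v huv
    have hiu : (Fintype.equivFin W u : ℕ) < N + 1 :=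
      lt_of_lt_of_le (Fintype.equivFin W u).isLt (by omega)
    have hiv : (Fintype.equivFin W v : ℕ) < N + 1 :=
      lt_of_lt_of_le (Fintype.equivFin W v).isLt (by omega)
    have h2 := (hsplit _ _ _ _ hiu hiv huv).1
    exact (Fintype.equivFin W).injective (Fin.ext h2)
  -- every non-root vertex has a neighbor with larger μ
  have hK2 : ∀ v, v ≠ v0 → ∃ x, H.Adj v x ∧ μ v < μ x := by
    intro v hv
    have hdpos : 0 < H.dist v0 v := hconn.pos_dist_of_ne (Ne.symm hv)
    obtain ⟨p, hp⟩ := hconn.exists_walk_length_eq_dist v0 v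
    cases hrev : p.reverse with
    | nil =>
      exfalso
      have h0 : p.reverse.length = 0 := by rw [hrev]; rfl
      rw [SimpleGraph.Walk.length_reverse, hp] at h0
      omega
    | cons h q =>
      rename_i x
      refine ⟨x, h, ?_⟩
      have hlen : q.length = H.dist v0 v - 1 := by
        have h0 : p.reverse.length = q.length + 1 := by rw [hrev]; rfl
        rw [SimpleGraph.Walk.length_reverse, hp] at h0
        omega
      have hdx : H.dist v0 x ≤ H.dist v0 v - 1 := by
        have h1 := dist_le q.reverse
        rwa [SimpleGraph.Walk.length_reverse, hlen] at h1
      have hdxlt : H.dist v0 x < H.dist v0 v := by omega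
      have hdvN : H.dist v0 v < N := hdistlt v
      have hiv : (Fintype.equivFin W v : ℕ) < N := (Fintype.equivFin W v).isLt
      have hix : (0:ℕ) ≤ (Fintype.equivFin W x : ℕ) := Nat.zero_le _
      have e1 : (N+1)*(N - H.dist v0 v) + (N+1) ≤ (N+1)*(N - H.dist v0 x) := by
        have hstep : (N - H.dist v0 v) + 1 ≤ N - H.dist v0 x := by omega
        calc (N+1)*(N - H.dist v0 v) + (N+1) = (N+1)*((N - H.dist v0 v)+1) := by ring
          _ ≤ (N+1)*(N - H.dist v0 x) := Nat.mul_le_mul_left _ hstep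
      simp only [hμ]
      omega
  -- avoid sets are small
  have hcard : ∀ v, (((H.neighborFinset v).filter (fun u => μ u < μ v)).card) < a := by
    intro v
    by_cases hv : v = v0
    · calc ((H.neighborFinset v).filter (fun u => μ u < μ v)).card
          ≤ (H.neighborFinset v).card := Finset.card_filter_le _ _
        _ = H.degree v := rfl
        _ < a := by rw [hv]; exact hv0
    · obtain ⟨x, hx, hμx⟩ := hK2 v hv
      have hsub : ((H.neighborFinset v).filter (fun u => μ u < μ v)) ⊆
          (H.neighborFinset v).erase x := by
        intro u hu
        rw [Finset.mem_filter] at hu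
        rw [Finset.mem_erase]
        refine ⟨?_, hu.1⟩
        rintro rfl
        omega
      calc _ ≤ ((H.neighborFinset v).erase x).card := Finset.card_le_card hsub
        _ < (H.neighborFinset v).card := Finset.card_erase_lt_of_mem
              ((H.mem_neighborFinset v x).mpr hx)
        _ = H.degree v := rfl
        _ ≤ a := hdeg v
  -- fresh colors exist
  have hfresh : ∀ v, (Finset.univ \ ((H.neighborFinset v).filter
      (fun u => μ u < μ v)).image (greedyAux H μ ha (μ v))).Nonempty := by
    intro v
    rw [← Finset.card_pos, Finset.card_sdiff_of_subset (Finset.subset_univ _)]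
    have h1 : (((H.neighborFinset v).filter (fun u => μ u < μ v)).image
        (greedyAux H μ ha (μ v))).card ≤
        ((H.neighborFinset v).filter (fun u => μ u < μ v)).card :=
      Finset.card_image_le
    have h2 : (Finset.univ : Finset (Fin a)).card = a := by simp
    have := hcard v
    omega
  set g : W → Fin a := fun v => greedyAux H μ ha (μ v + 1) v with hg
  have hnotmem : ∀ v, g v ∉ ((H.neighborFinset v).filter
      (fun u => μ u < μ v)).image (greedyAux H μ ha (μ v)) := by
    intro v
    have := (hfresh v).choose_spec
    rw [Finset.mem_sdiff] at this
    have hunfold : g v = (hfresh v).choose := by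
      show greedyAux H μ ha (μ v + 1) v = _
      rw [greedyAux_succ H μ ha (μ v) v, if_pos rfl, dif_pos (hfresh v)]
    rw [hunfold]
    exact this.2
  have hstable : ∀ n v, μ v < n → greedyAux H μ ha n v = g v := by
    intro n
    induction n with
    | zero => intro v hv; omega
    | succ n ih =>
      intro v hv
      by_cases hle : μ v < n
      · rw [greedyAux_succ, if_neg (by omega)]
        exact ih v hle
      · have hmv : μ v = n := by omega
        have hgv : g v = greedyAux H μ ha (μ v + 1) v := rfl
        rw [hgv, hmv]
  refine ⟨g, ?_⟩
  have key : ∀ ⦃v w⦄, H.Adj v w → μ w < μ v → g v ≠ g w := by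
    intro v w hadj hlt' heq
    apply hnotmem v
    rw [heq]
    have : g w = greedyAux H μ ha (μ v) w := (hstable (μ v) w hlt').symm
    rw [this]
    exact Finset.mem_image_of_mem _ (Finset.mem_filter.mpr
      ⟨(H.mem_neighborFinset v w).mpr hadj, hlt'⟩)
  intro v w hadj
  rcases lt_trichotomy (μ w) (μ v) with h | h | h
  · exact key hadj h
  · exact absurd (hμinj h.symm) hadj.ne
  · exact (key hadj.symm h).symm

lemma no_acyclic_coloring_of_regular {W : Type*} [Fintype W] [Nonempty W] {H : SimpleGraph W}
    [DecidableRel H.Adj] {d : ℕ} (hd : 2 ≤ d) (hreg : ∀ v, H.degree v = d)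
    {c : Sym2 W → Fin d} (hc : IsAcyclicEdgeColoring H c) : False := by
  classical
  have hsame : ∀ {x y z w : W}, H.Adj x y → H.Adj z w → c s(x,y) = c s(z,w) →
      (∃ v, v ∈ s(x,y) ∧ v ∈ s(z,w)) → s(x,y) = s(z,w) := by
    intro x y z w h1 h2 hcol hsh
    by_contra hne
    exact hc.1 _ (H.mem_edgeSet.mpr h1) _ (H.mem_edgeSet.mpr h2) hne hsh hcol
  -- every vertex sees every colour
  have hall : ∀ (v : W) (γ : Fin d), ∃ w, H.Adj v w ∧ c s(v, w) = γ := by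
    intro v γ
    set ψ : {w // w ∈ H.neighborFinset v} → Fin d := fun w => c s(v, (w : W)) with hψ
    have hinj : Function.Injective ψ := by
      intro w1 w2 h12
      have a1 : H.Adj v w1 := (H.mem_neighborFinset v _).mp w1.2
      have a2 : H.Adj v w2 := (H.mem_neighborFinset v _).mp w2.2
      have := hsame a1 a2 h12 ⟨v, Sym2.mem_mk_left _ _, Sym2.mem_mk_left _ _⟩
      exact Subtype.ext (Sym2.congr_right.mp this)
    have hcardeq : Fintype.card {w // w ∈ H.neighborFinset v} = Fintype.card (Fin d) := by
      rw [Fintype.card_coe, Fintype.card_fin]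
      exact hreg v
    have hbij : Function.Bijective ψ :=
      (Fintype.bijective_iff_injective_and_card ψ).mpr ⟨hinj, hcardeq⟩
    obtain ⟨w, hw⟩ := hbij.2 γ
    exact ⟨w, (H.mem_neighborFinset v _).mp w.2, hw⟩
  set γ1 : Fin d := ⟨0, by omega⟩ with hγ1
  set γ2 : Fin d := ⟨1, by omega⟩ with hγ2
  have hγne : γ1 ≠ γ2 := by simp [hγ1, hγ2]
  set U := twoColourSubgraph H c γ1 γ2 with hU
  have hUadj : ∀ x y, U.Adj x y ↔ H.Adj x y ∧ (c s(x,y) = γ1 ∨ c s(x,y) = γ2) := fun x y => Iff.rfl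
  have hUacy : U.IsAcyclic := hc.2 γ1 γ2
  -- neighbours in U
  have hnbr : ∀ v : W, ∃ w1 w2 : W, w1 ≠ w2 ∧ U.Adj v w1 ∧ U.Adj v w2 ∧
      (∀ u, U.Adj v u → u = w1 ∨ u = w2) := by
    intro v
    obtain ⟨w1, hw1, hcw1⟩ := hall v γ1
    obtain ⟨w2, hw2, hcw2⟩ := hall v γ2
    refine ⟨w1, w2, ?_, ⟨hw1, Or.inl hcw1⟩, ⟨hw2, Or.inr hcw2⟩, ?_⟩
    · rintro rfl; exact hγne (hcw1 ▸ hcw2 ▸ rfl)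
    · intro u hu
      rcases hu.2 with h | h
      · left
        have := hsame hu.1 hw1 (h.trans hcw1.symm) ⟨v, Sym2.mem_mk_left _ _, Sym2.mem_mk_left _ _⟩
        exact Sym2.congr_right.mp this
      · right
        have := hsame hu.1 hw2 (h.trans hcw2.symm) ⟨v, Sym2.mem_mk_left _ _, Sym2.mem_mk_left _ _⟩
        exact Sym2.congr_right.mp this
  haveI : DecidableRel U.Adj := Classical.decRel _
  have hUnbrF : ∀ v : W, ∃ w1 w2 : W, w1 ≠ w2 ∧ U.neighborFinset v = {w1, w2} := by
    intro v
    obtain ⟨w1, w2, hne, h1, h2, huniq⟩ := hnbr v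
    refine ⟨w1, w2, hne, ?_⟩
    ext u
    rw [mem_neighborFinset, Finset.mem_insert, Finset.mem_singleton]
    constructor
    · exact huniq u
    · rintro (rfl | rfl); exacts [h1, h2]
  have hUdeg : ∀ v : W, U.degree v = 2 := by
    intro v
    obtain ⟨w1, w2, hne, hF⟩ := hUnbrF v
    rw [SimpleGraph.degree, hF]
    rw [Finset.card_insert_of_notMem (by simpa using hne), Finset.card_singleton]
  -- pick a bridge edge
  obtain ⟨v0⟩ := ‹Nonempty W›
  obtain ⟨w1, w2, hne12, h1, h2, huniq⟩ := hnbr v0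
  have he0 : s(v0, w1) ∈ U.edgeSet := U.mem_edgeSet.mpr h1
  have hbridge := (isAcyclic_iff_forall_edge_isBridge.mp hUacy) he0
  rw [isBridge_iff] at hbridge
  set U' := U \ SimpleGraph.fromEdgeSet {s(v0, w1)} with hU'
  have hUnreach : ¬ U'.Reachable v0 w1 := hbridge
  have hU'adj : ∀ x y, U'.Adj x y ↔ U.Adj x y ∧ s(x, y) ≠ s(v0, w1) := by
    intro x y
    rw [hU', sdiff_adj, fromEdgeSet_adj]
    constructor
    · rintro ⟨h, h2⟩
      refine ⟨h, fun hmem => h2 ⟨hmem, h.ne⟩⟩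
    · rintro ⟨h, h2⟩
      exact ⟨h, fun hmem => h2 hmem.1⟩
  haveI : DecidableRel U'.Adj := Classical.decRel _
  -- degrees in U'
  have hdegv0 : U'.degree v0 = 1 := by
    have : U'.neighborFinset v0 = (U.neighborFinset v0).erase w1 := by
      ext u
      rw [mem_neighborFinset, Finset.mem_erase, mem_neighborFinset, hU'adj]
      constructor
      · rintro ⟨h, hne⟩
        exact ⟨fun hu => hne (by rw [hu]), h⟩
      · rintro ⟨hne, h⟩
        exact ⟨h, fun hs => hne (Sym2.congr_right.mp hs)⟩
    rw [SimpleGraph.degree, this, Finset.card_erase_of_mem (by rwa [mem_neighborFinset])]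
    rw [← SimpleGraph.degree, hUdeg]
  have hdegother : ∀ x, x ≠ v0 → x ≠ w1 → U'.degree x = 2 := by
    intro x hx1 hx2
    have : U'.neighborFinset x = U.neighborFinset x := by
      ext u
      rw [mem_neighborFinset, mem_neighborFinset, hU'adj]
      constructor
      · exact fun h => h.1
      · intro h
        refine ⟨h, fun hs => ?_⟩
        have hxmem : x ∈ s(v0, w1) := hs ▸ Sym2.mem_mk_left x u
        rw [Sym2.mem_iff] at hxmem
        rcases hxmem with h' | h'
        exacts [hx1 h', hx2 h']
    rw [SimpleGraph.degree, this, ← SimpleGraph.degree, hUdeg]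
  -- the component of v0 in U'
  set s : Set W := {x | U'.Reachable v0 x} with hs
  have hv0s : v0 ∈ s := ⟨SimpleGraph.Walk.nil⟩
  have hw1s : w1 ∉ s := fun h => hUnreach h
  have hclosed : ∀ {x y}, x ∈ s → U'.Adj x y → y ∈ s := by
    intro x y hx hadj
    exact hx.trans hadj.reachable
  haveI : Fintype ↥s := Set.Finite.fintype (Set.toFinite s)
  set K := U'.induce s with hK
  haveI : DecidableRel K.Adj := Classical.decRel _
  have hKdeg : ∀ x : ↥s, K.degree x = U'.degree (x : W) := by
    intro x
    rw [← card_neighborSet_eq_degree, ← card_neighborSet_eq_degree]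
    apply Fintype.card_congr
    refine ⟨fun y => ⟨(y : ↥s), y.2⟩, fun y => ⟨⟨(y : W), hclosed x.2 y.2⟩, y.2⟩, ?_, ?_⟩
    · intro y; rfl
    · intro y; rfl
  have heven := SimpleGraph.even_card_odd_degree_vertices K
  have hfilter : (Finset.univ.filter fun v : ↥s => Odd (K.degree v)) = {⟨v0, hv0s⟩} := by
    ext x
    rw [Finset.mem_filter, Finset.mem_singleton]
    constructor
    · rintro ⟨-, hodd⟩
      rw [hKdeg] at hodd
      by_contra hxne
      have hx1 : (x : W) ≠ v0 := fun h => hxne (Subtype.ext h)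
      have hx2 : (x : W) ≠ w1 := fun h => hw1s (h ▸ x.2)
      rw [hdegother _ hx1 hx2] at hodd
      exact (Nat.not_odd_iff_even.mpr (by norm_num)) hodd
    · rintro rfl
      refine ⟨Finset.mem_univ _, ?_⟩
      rw [hKdeg]
      simp only []
      rw [hdegv0]
      exact odd_one
  rw [hfilter, Finset.card_singleton] at heven
  norm_num at heven

lemma piBoxProd_degree {k : ℕ} {V : Fin k → Type*} [∀ i, Fintype (V i)]
    (G : ∀ i, SimpleGraph (V i)) [∀ i, DecidableRel (G i).Adj]
    [inst : DecidableRel (piBoxProd G).Adj] (x : ∀ i, V i) :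
    (piBoxProd G).degree x = ∑ i, (G i).degree (x i) := by
  classical
  rw [← card_neighborSet_eq_degree]
  have hφ : ∀ p : (Σ i, (G i).neighborSet (x i)), Function.update x p.1 (p.2 : V p.1) ∈
      (piBoxProd G).neighborSet x := by
    rintro ⟨i, w, hw⟩
    refine ⟨i, ?_, ?_⟩
    · rw [Function.update_self]
      exact hw
    · intro j hj
      rw [Function.update_of_ne hj]
  set φ : (Σ i, (G i).neighborSet (x i)) → (piBoxProd G).neighborSet x :=
    fun p => ⟨Function.update x p.1 (p.2 : V p.1), hφ p⟩ with hφdef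
  have hinj : Function.Injective φ := by
    rintro ⟨i, w, hw⟩ ⟨i', w', hw'⟩ heq
    have heq' : Function.update x i w = Function.update x i' w' := congrArg Subtype.val heq
    by_cases hii : i = i'
    · subst hii
      have : w = w' := by
        have := congrFun heq' i
        rwa [Function.update_self, Function.update_self] at this
      subst this
      rfl
    · exfalso
      have := congrFun heq' i
      rw [Function.update_self, Function.update_of_ne hii] at this
      exact hw.ne' this
  have hsurj : Function.Surjective φ := by
    rintro ⟨y, i, hadj, hrest⟩
    refine ⟨⟨i, ⟨y i, hadj⟩⟩, Subtype.ext ?_⟩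
    funext j
    by_cases hj : j = i
    · subst hj
      simp [hφdef]
    · show Function.update x i (y i) j = y j
      simp only [Function.update_of_ne hj]
      exact hrest j hj
  calc Fintype.card ((piBoxProd G).neighborSet x)
      = Fintype.card (Σ i, (G i).neighborSet (x i)) :=
        (Fintype.card_of_bijective ⟨hinj, hsurj⟩).symm
    _ = ∑ i, Fintype.card ((G i).neighborSet (x i)) := Fintype.card_sigma
    _ = ∑ i, (G i).degree (x i) := by
        apply Finset.sum_congr rfl
        intro i _
        exact card_neighborSet_eq_degree (G i) (x i)

lemma piBoxProd_maxDegree {k : ℕ} {V : Fin k → Type*} [∀ i, Fintype (V i)]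
    [∀ i, Nonempty (V i)] (G : ∀ i, SimpleGraph (V i)) [∀ i, DecidableRel (G i).Adj]
    [inst : DecidableRel (piBoxProd G).Adj] :
    (piBoxProd G).maxDegree = ∑ i, (G i).maxDegree := by
  apply le_antisymm
  · apply maxDegree_le_of_forall_degree_le
    intro x
    rw [piBoxProd_degree]
    exact Finset.sum_le_sum (fun i _ => (G i).degree_le_maxDegree (x i))
  · have := fun i => (G i).exists_maximal_degree_vertex
    choose xs hxs using this
    calc ∑ i, (G i).maxDegree = ∑ i, (G i).degree (xs i) := by
          apply Finset.sum_congr rfl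
          intro i _
          exact hxs i
      _ = (piBoxProd G).degree (fun i => xs i) := (piBoxProd_degree G _).symm
      _ ≤ (piBoxProd G).maxDegree := degree_le_maxDegree _ _

section TF

variable {V W : Type*} {G : SimpleGraph V} {H : SimpleGraph W} {a b : ℕ} [NeZero a]
variable (cG : Sym2 V → Fin a) (cH : Sym2 W → Fin b) (g : W → Fin a)

open scoped Classical in
noncomputable def tfColor : Sym2 (V × W) → (Fin a ⊕ Fin b) :=
  Sym2.lift ⟨fun x y =>
    if x.2 = y.2 then Sum.inl (cG s(x.1, y.1) + g x.2)
    else if x.1 = y.1 then Sum.inr (cH s(x.2, y.2))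
    else Sum.inl 0, by
  intro x y
  dsimp only
  by_cases h2 : x.2 = y.2
  · rw [if_pos h2, if_pos h2.symm, Sym2.eq_swap, h2]
  · rw [if_neg h2, if_neg (Ne.symm h2)]
    by_cases h1 : x.1 = y.1
    · rw [if_pos h1, if_pos h1.symm, Sym2.eq_swap]
    · rw [if_neg h1, if_neg (Ne.symm h1)]⟩

lemma tfColor_G {x y : V × W} (h : x.2 = y.2) :
    tfColor cG cH g s(x, y) = Sum.inl (cG s(x.1, y.1) + g x.2) := by
  simp only [tfColor, Sym2.lift_mk, if_pos h]

lemma tfColor_H {x y : V × W} (h2 : x.2 ≠ y.2) (h1 : x.1 = y.1) :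
    tfColor cG cH g s(x, y) = Sum.inr (cH s(x.2, y.2)) := by
  simp only [tfColor, Sym2.lift_mk, if_neg h2, if_pos h1]

variable {cG cH g}

lemma tf_proper (hcG : IsProperEdgeColoring G cG) (hcH : IsProperEdgeColoring H cH) :
    IsProperEdgeColoring (G □ H) (tfColor cG cH g) := by
  intro e1 he1 e2 he2 hne hshare
  obtain ⟨z, hz1, hz2⟩ := hshare
  obtain ⟨p, rfl⟩ := Sym2.mem_iff_exists.mp hz1
  obtain ⟨q, rfl⟩ := Sym2.mem_iff_exists.mp hz2
  have hpq : p ≠ q := fun h => hne (by rw [h])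
  have ha1 := (G □ H).mem_edgeSet.mp he1
  have ha2 := (G □ H).mem_edgeSet.mp he2
  rw [boxProd_adj] at ha1 ha2
  rcases ha1 with ⟨hG1, hE1⟩ | ⟨hH1, hE1⟩
  · rcases ha2 with ⟨hG2, hE2⟩ | ⟨hH2, hE2⟩
    · rw [tfColor_G cG cH g hE1, tfColor_G cG cH g hE2]
      intro hcol
      have hcc : cG s(z.1, p.1) = cG s(z.1, q.1) := by
        have := Sum.inl.inj hcol
        exact add_right_cancel this
      have hp1q1 : p.1 ≠ q.1 := by
        intro h
        apply hpq
        exact Prod.ext h (hE1.symm.trans hE2)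
      exact hcG s(z.1, p.1) (G.mem_edgeSet.mpr hG1) s(z.1, q.1) (G.mem_edgeSet.mpr hG2)
        (fun h => hp1q1 (Sym2.congr_right.mp h))
        ⟨z.1, Sym2.mem_mk_left _ _, Sym2.mem_mk_left _ _⟩ hcc
    · rw [tfColor_G cG cH g hE1, tfColor_H cG cH g hH2.ne hE2]
      exact fun h => Sum.inl_ne_inr h
  · rcases ha2 with ⟨hG2, hE2⟩ | ⟨hH2, hE2⟩
    · rw [tfColor_H cG cH g hH1.ne hE1, tfColor_G cG cH g hE2]
      exact fun h => Sum.inr_ne_inl h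
    · rw [tfColor_H cG cH g hH1.ne hE1, tfColor_H cG cH g hH2.ne hE2]
      intro hcol
      have hcc : cH s(z.2, p.2) = cH s(z.2, q.2) := Sum.inr.inj hcol
      have hp2q2 : p.2 ≠ q.2 := by
        intro h
        apply hpq
        exact Prod.ext (hE1.symm.trans hE2) h
      exact hcH s(z.2, p.2) (H.mem_edgeSet.mpr hH1) s(z.2, q.2) (H.mem_edgeSet.mpr hH2)
        (fun h => hp2q2 (Sym2.congr_right.mp h))
        ⟨z.2, Sym2.mem_mk_left _ _, Sym2.mem_mk_left _ _⟩ hcc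

lemma twoColourSubgraph_comm {X γ : Type*} (K : SimpleGraph X) (c : Sym2 X → γ) (x y : γ) :
    twoColourSubgraph K c x y = twoColourSubgraph K c y x := by
  ext p q
  show K.Adj p q ∧ _ ↔ K.Adj p q ∧ _
  rw [or_comm]

lemma sym2_prod_eq {x x' y y' : V × W} (h1 : s(x.1, x'.1) = s(y.1, y'.1))
    (hx : x.2 = x'.2) (hy : y.2 = y'.2) (hmid : x.2 = y.2) : s(x, x') = s(y, y') := by
  rw [Sym2.eq_iff] at h1 ⊢
  rcases h1 with ⟨e1, e2⟩ | ⟨e1, e2⟩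
  · left
    exact ⟨Prod.ext e1 hmid, Prod.ext e2 (hx.symm.trans (hmid.trans hy))⟩
  · right
    exact ⟨Prod.ext e1 (hmid.trans hy), Prod.ext e2 (hx.symm.trans hmid)⟩

lemma tf_acyclic (hcG : IsAcyclicEdgeColoring G cG) (hcH : IsAcyclicEdgeColoring H cH)
    (hg : ∀ ⦃v w⦄, H.Adj v w → g v ≠ g w) :
    IsAcyclicEdgeColoring (G □ H) (tfColor cG cH g) := by
  classical
  refine ⟨tf_proper hcG.1 hcH.1, ?_⟩
  have hβuniq : ∀ {β : Fin b} {w w1 w2 : W}, H.Adj w w1 → H.Adj w w2 →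
      cH s(w, w1) = β → cH s(w, w2) = β → w1 = w2 := by
    intro β w w1 w2 h1 h2 hc1 hc2
    by_contra hne
    refine hcH.1 s(w, w1) (H.mem_edgeSet.mpr h1) s(w, w2) (H.mem_edgeSet.mpr h2)
      (fun h => hne (Sym2.congr_right.mp h))
      ⟨w, Sym2.mem_mk_left _ _, Sym2.mem_mk_left _ _⟩ (hc1.trans hc2.symm)
  -- the mixed case, proven for (inl α, inr β); the other order reduces to it
  have hmixed : ∀ (α : Fin a) (β : Fin b),
      (twoColourSubgraph (G □ H) (tfColor cG cH g) (Sum.inl α) (Sum.inr β)).IsAcyclic := by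
    intro α β
    set S := twoColourSubgraph (G □ H) (tfColor cG cH g) (Sum.inl α) (Sum.inr β) with hS
    have hSadj : ∀ {p q : V × W}, S.Adj p q →
        (G.Adj p.1 q.1 ∧ p.2 = q.2 ∧ cG s(p.1, q.1) + g p.2 = α) ∨
        (H.Adj p.2 q.2 ∧ p.1 = q.1 ∧ cH s(p.2, q.2) = β) := by
      intro p q hpq
      obtain ⟨hadj, hcol⟩ := hpq
      rw [boxProd_adj] at hadj
      rcases hadj with ⟨hGa, hEa⟩ | ⟨hHa, hEa⟩
      · left
        refine ⟨hGa, hEa, ?_⟩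
        rw [tfColor_G cG cH g hEa] at hcol
        rcases hcol with h | h
        · exact Sum.inl.inj h
        · exact absurd h Sum.inl_ne_inr
      · right
        refine ⟨hHa, hEa, ?_⟩
        rw [tfColor_H cG cH g hHa.ne hEa] at hcol
        rcases hcol with h | h
        · exact absurd h Sum.inr_ne_inl
        · exact Sum.inr.inj h
    intro x0 c
    set v0 := x0.2 with hv0
    set v1 := if h : ∃ w, H.Adj v0 w ∧ cH s(v0, w) = β then h.choose else v0 with hv1
    have hv1spec : (∃ w, H.Adj v0 w ∧ cH s(v0, w) = β) → H.Adj v0 v1 ∧ cH s(v0, v1) = β := by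
      intro h
      rw [hv1, dif_pos h]
      exact h.choose_spec
    have hv1none : ¬(∃ w, H.Adj v0 w ∧ cH s(v0, w) = β) → v1 = v0 := by
      intro h
      rw [hv1, dif_neg h]
    refine master (S := S) (F := twoColourSubgraph G cG (α - g v0) (α - g v1)) Prod.fst
      (fun p => p.2 = v0 ∨ p.2 = v1) ?_ ?_ ?_ ?_ (hcG.2 _ _) (Or.inl rfl) c
    · -- hP
      have hstep0 : ∀ {p q : V × W}, H.Adj p.2 q.2 → cH s(p.2, q.2) = β → p.2 = v0 →
          q.2 = v1 := by
        intro p q hHa hcol hp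
        rw [hp] at hHa hcol
        have hex : ∃ w, H.Adj v0 w ∧ cH s(v0, w) = β := ⟨q.2, hHa, hcol⟩
        obtain ⟨hadj1, hcol1⟩ := hv1spec hex
        exact hβuniq hHa hadj1 hcol hcol1
      intro p q hpq hp
      rcases hSadj hpq with ⟨_, hE, _⟩ | ⟨hHa, _, hcol⟩
      · rw [← hE]; exact hp
      · rcases hp with hp | hp
        · exact Or.inr (hstep0 hHa hcol hp)
        · by_cases hveq : v1 = v0
          · exact Or.inr (hstep0 hHa hcol (hp.trans hveq))
          · have hex : ∃ w, H.Adj v0 w ∧ cH s(v0, w) = β := by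
              by_contra hex
              exact hveq (hv1none hex)
            obtain ⟨hadj1, hcol1⟩ := hv1spec hex
            left
            rw [hp] at hHa hcol
            refine hβuniq hHa hadj1.symm hcol ?_
            rw [Sym2.eq_swap]
            exact hcol1
    · -- hadj
      intro p q hpq hp
      rcases hSadj hpq with ⟨hGa, hE, hcol⟩ | ⟨_, hE, _⟩
      · refine Or.inr ⟨hGa, ?_⟩
        rcases hp with hp | hp
        · left
          rw [← hp]
          exact eq_sub_of_add_eq hcol
        · right
          rw [← hp]
          exact eq_sub_of_add_eq hcol
      · exact Or.inl hE
    · -- hinj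
      intro x x' y y' hx hy hPx hPy hfx hfy hee
      have hx' := hSadj hx
      have hy' := hSadj hy
      rcases hx' with ⟨hGx, hEx, hcx⟩ | ⟨_, hEx, _⟩
      swap
      · exact absurd hEx hfx
      rcases hy' with ⟨hGy, hEy, hcy⟩ | ⟨_, hEy, _⟩
      swap
      · exact absurd hEy hfy
      by_cases hmid : x.2 = y.2
      · exact sym2_prod_eq hee hEx hEy hmid
      · exfalso
        have hcc : cG s(x.1, x'.1) = cG s(y.1, y'.1) := by rw [hee]
        have : α - g x.2 = α - g y.2 := by
          rw [← eq_sub_of_add_eq hcx, ← eq_sub_of_add_eq hcy]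
          exact hcc
        have hgg : g x.2 = g y.2 := sub_right_injective this
        -- x.2 ≠ y.2 and both in {v0, v1} → {x.2,y.2} = {v0,v1}, v0 ≠ v1
        have hv1ne : v1 ≠ v0 := by
          rcases hPx with h1 | h1 <;> rcases hPy with h2 | h2
          · exact absurd (h1.trans h2.symm) hmid
          · intro hv; rw [h1, h2, hv] at hmid; exact hmid rfl
          · intro hv; rw [h1, h2, hv] at hmid; exact hmid rfl
          · exact absurd (h1.trans h2.symm) hmid
        have hadj01 : H.Adj v0 v1 := by
          by_cases hex : ∃ w, H.Adj v0 w ∧ cH s(v0, w) = β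
          · exact (hv1spec hex).1
          · exact absurd (hv1none hex) hv1ne
        have : g v0 = g v1 := by
          rcases hPx with h1 | h1 <;> rcases hPy with h2 | h2
          · exact absurd (h1.trans h2.symm) hmid
          · rw [← h1, ← h2]; exact hgg
          · rw [← h1, ← h2]; exact hgg.symm
          · exact absurd (h1.trans h2.symm) hmid
        exact hg hadj01 this
    · -- huniq
      intro x y z hxy hyz hPx hfxy hfyz
      have h1 := hSadj hxy
      have h2 := hSadj hyz
      rcases h1 with ⟨hGa, _, _⟩ | ⟨hHa1, hE1, hc1⟩
      · exact absurd hfxy hGa.ne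
      rcases h2 with ⟨hGa, _, _⟩ | ⟨hHa2, hE2, hc2⟩
      · exact absurd hfyz hGa.ne
      have : x.2 = z.2 := by
        refine hβuniq hHa1.symm hHa2 ?_ hc2
        rw [Sym2.eq_swap]
        exact hc1
      exact Prod.ext (hE1.trans hE2) this
  intro xc yc
  match xc, yc with
  | Sum.inl α, Sum.inl α' =>
    set S := twoColourSubgraph (G □ H) (tfColor cG cH g) (Sum.inl α) (Sum.inl α') with hS
    have hSadj : ∀ {p q : V × W}, S.Adj p q →
        G.Adj p.1 q.1 ∧ p.2 = q.2 ∧ (cG s(p.1, q.1) + g p.2 = α ∨ cG s(p.1, q.1) + g p.2 = α') := by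
      intro p q hpq
      obtain ⟨hadj, hcol⟩ := hpq
      rw [boxProd_adj] at hadj
      rcases hadj with ⟨hGa, hEa⟩ | ⟨hHa, hEa⟩
      · refine ⟨hGa, hEa, ?_⟩
        rw [tfColor_G cG cH g hEa] at hcol
        rcases hcol with h | h
        · exact Or.inl (Sum.inl.inj h)
        · exact Or.inr (Sum.inl.inj h)
      · exfalso
        rw [tfColor_H cG cH g hHa.ne hEa] at hcol
        rcases hcol with h | h
        · exact Sum.inr_ne_inl h
        · exact Sum.inr_ne_inl h
    intro x0 c
    refine master (S := S)
      (F := twoColourSubgraph G cG (α - g x0.2) (α' - g x0.2)) Prod.fst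
      (fun p => p.2 = x0.2) ?_ ?_ ?_ ?_ (hcG.2 _ _) rfl c
    · intro p q hpq hp
      rw [← (hSadj hpq).2.1]; exact hp
    · intro p q hpq hp
      obtain ⟨hGa, hE, hcol⟩ := hSadj hpq
      refine Or.inr ⟨hGa, ?_⟩
      rcases hcol with h | h
      · exact Or.inl (by rw [← hp]; exact eq_sub_of_add_eq h)
      · exact Or.inr (by rw [← hp]; exact eq_sub_of_add_eq h)
    · intro x x' y y' hx hy hPx hPy _ _ hee
      exact sym2_prod_eq hee (hSadj hx).2.1 (hSadj hy).2.1 (hPx.trans hPy.symm)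
    · intro x y z hxy hyz hPx hfxy hfyz
      exact absurd hfxy (hSadj hxy).1.ne
  | Sum.inr β, Sum.inr β' =>
    set S := twoColourSubgraph (G □ H) (tfColor cG cH g) (Sum.inr β) (Sum.inr β') with hS
    have hSadj : ∀ {p q : V × W}, S.Adj p q →
        H.Adj p.2 q.2 ∧ p.1 = q.1 ∧ (cH s(p.2, q.2) = β ∨ cH s(p.2, q.2) = β') := by
      intro p q hpq
      obtain ⟨hadj, hcol⟩ := hpq
      rw [boxProd_adj] at hadj
      rcases hadj with ⟨hGa, hEa⟩ | ⟨hHa, hEa⟩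
      · exfalso
        rw [tfColor_G cG cH g hEa] at hcol
        rcases hcol with h | h
        · exact Sum.inl_ne_inr h
        · exact Sum.inl_ne_inr h
      · refine ⟨hHa, hEa, ?_⟩
        rw [tfColor_H cG cH g hHa.ne hEa] at hcol
        rcases hcol with h | h
        · exact Or.inl (Sum.inr.inj h)
        · exact Or.inr (Sum.inr.inj h)
    intro x0 c
    refine master (S := S)
      (F := twoColourSubgraph H cH β β') Prod.snd
      (fun p => p.1 = x0.1) ?_ ?_ ?_ ?_ (hcH.2 _ _) rfl c
    · intro p q hpq hp
      rw [← (hSadj hpq).2.1]; exact hp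
    · intro p q hpq hp
      obtain ⟨hHa, hE, hcol⟩ := hSadj hpq
      exact Or.inr ⟨hHa, hcol⟩
    · intro x x' y y' hx hy hPx hPy _ _ hee
      -- mirrored version of sym2_prod_eq
      obtain ⟨_, hEx, _⟩ := hSadj hx
      obtain ⟨_, hEy, _⟩ := hSadj hy
      rw [Sym2.eq_iff] at hee ⊢
      have hxy1 : x.1 = y.1 := hPx.trans hPy.symm
      rcases hee with ⟨e1, e2⟩ | ⟨e1, e2⟩
      · left
        exact ⟨Prod.ext hxy1 e1, Prod.ext ((hEx.symm.trans hxy1).trans hEy) e2⟩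
      · right
        exact ⟨Prod.ext (hxy1.trans hEy) e1, Prod.ext (hEx.symm.trans hxy1) e2⟩
    · intro x y z hxy hyz hPx hfxy hfyz
      exact absurd hfxy (hSadj hxy).1.ne
  | Sum.inl α, Sum.inr β => exact hmixed α β
  | Sum.inr β, Sum.inl α =>
    rw [twoColourSubgraph_comm]
    exact hmixed α β

end TF

lemma tf_exists {V W : Type*} {G : SimpleGraph V} {H : SimpleGraph W} {a b : ℕ} (ha : 0 < a)
    (hG : ∃ cG : Sym2 V → Fin a, IsAcyclicEdgeColoring G cG)
    (hH : ∃ cH : Sym2 W → Fin b, IsAcyclicEdgeColoring H cH)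
    (hg : ∃ g : W → Fin a, ∀ ⦃v w⦄, H.Adj v w → g v ≠ g w) :
    ∃ c : Sym2 (V × W) → Fin (a + b), IsAcyclicEdgeColoring (G □ H) c := by
  obtain ⟨cG, hcG⟩ := hG
  obtain ⟨cH, hcH⟩ := hH
  obtain ⟨g, hgp⟩ := hg
  haveI : NeZero a := ⟨by omega⟩
  exact ⟨_, isAcyclicEdgeColoring_equiv (tf_acyclic hcG hcH hgp) finSumFinEquiv⟩

def finSnocEquiv {j : ℕ} (U : Fin (j+1) → Type*) :
    (∀ i, U i) ≃ ((∀ i : Fin j, U i.castSucc) × U (Fin.last j)) where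
  toFun f := (fun i => f i.castSucc, f (Fin.last j))
  invFun p := Fin.snoc p.1 p.2
  left_inv f := by
    funext i
    refine Fin.lastCases ?_ ?_ i
    · exact Fin.snoc_last _ _
    · intro i'
      exact Fin.snoc_castSucc _ _ _
  right_inv p := by
    refine Prod.ext ?_ ?_
    · funext i
      exact Fin.snoc_castSucc _ _ _
    · exact Fin.snoc_last _ _

universe u

set_option maxHeartbeats 1000000 in
lemma ind_main : ∀ (j : ℕ) (hj : 0 < j) (U : Fin j → Type u) [∀ i, Fintype (U i)]
    [∀ i, Nonempty (U i)] (Gs : ∀ i, SimpleGraph (U i)) [∀ i, DecidableRel (Gs i).Adj],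
    (∀ i, (Gs i).Connected) →
    (∀ i, 1 ≤ (Gs i).maxDegree) →
    (∀ i, (Gs i).maxDegree ≤ (Gs ⟨0, hj⟩).maxDegree) →
    2 ≤ (Gs ⟨0, hj⟩).maxDegree →
    (∀ i, ∃ c : Sym2 (U i) → Fin ((Gs i).maxDegree), IsAcyclicEdgeColoring (Gs i) c) →
    ∃ c : Sym2 (∀ i, U i) → Fin (∑ i, (Gs i).maxDegree),
      IsAcyclicEdgeColoring (piBoxProd Gs) c := by
  intro j
  induction j with
  | zero => omega
  | succ j ih =>
    intro hj U instU instNe Gs instG hconn hone hmaxle htwo hcolor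
    rcases Nat.eq_zero_or_pos j with rfl | hj0
    · -- base case : one factor
      letI hU1 : Unique (Fin (0+1)) :=
        ⟨⟨⟨0, hj⟩⟩, fun a => Fin.ext (by have := a.isLt; omega)⟩
      let e : (∀ i, U i) ≃ U (⟨0, hj⟩ : Fin (0+1)) := Equiv.piUnique U
      have hAdj : ∀ x y, (piBoxProd Gs).Adj x y ↔
          (Gs (⟨0, hj⟩ : Fin (0+1))).Adj (e x) (e y) := by
        intro x y
        constructor
        · rintro ⟨i, hadj, -⟩
          have hi : i = (⟨0, hj⟩ : Fin (0+1)) := Subsingleton.elim _ _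
          rw [hi] at hadj
          exact hadj
        · intro h
          exact ⟨⟨0, hj⟩, h, fun j hj' => absurd (Subsingleton.elim j _) hj'⟩
      obtain ⟨c0, hc0⟩ := hcolor ⟨0, hj⟩
      have hcA := isAcyclicEdgeColoring_of_iso e hAdj hc0
      have hsum : (Gs (⟨0, hj⟩ : Fin (0+1))).maxDegree = ∑ i, (Gs i).maxDegree := by
        rw [Fin.sum_univ_one]
        rfl
      exact ⟨_, isAcyclicEdgeColoring_equiv hcA (finCongr hsum)⟩
    · -- inductive step
      have hj' : 0 < j := hj0
      haveI : NeZero j := ⟨by omega⟩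
      set U' : Fin j → Type u := fun i => U i.castSucc with hU'
      set Gs' : ∀ i : Fin j, SimpleGraph (U' i) := fun i => Gs i.castSucc with hGs'
      letI instU' : ∀ i, Fintype (U' i) := fun i => instU _
      haveI instNe' : ∀ i, Nonempty (U' i) := fun i => instNe _
      letI instG' : ∀ i, DecidableRel (Gs' i).Adj := fun i => instG _
      have hzero : (Gs' ⟨0, hj'⟩) = Gs ⟨0, hj⟩ := rfl
      have hIH := @ih hj' U' instU' instNe' Gs' instG' (fun i => hconn _) (fun i => hone _)
        (fun i => hmaxle _) htwo (fun i => hcolor _)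
      have hΔ0DP : (Gs ⟨0, hj⟩).maxDegree ≤ (∑ i, (Gs' i).maxDegree) := by
        have := Finset.single_le_sum (f := fun i => (Gs' i).maxDegree)
          (fun i _ => Nat.zero_le _) (Finset.mem_univ (⟨0, hj'⟩ : Fin j))
        exact this
      have hHDP : (Gs (Fin.last j)).maxDegree ≤ (∑ i, (Gs' i).maxDegree) := le_trans (hmaxle (Fin.last j)) hΔ0DP
      have hDPpos : 0 < (∑ i, (Gs' i).maxDegree) := by omega
      -- proper vertex colouring of the new factor
      have hg : ∃ g : U (Fin.last j) → Fin (∑ i, (Gs' i).maxDegree), ∀ ⦃v w⦄, (Gs (Fin.last j)).Adj v w → g v ≠ g w := by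
        apply exists_proper_vertex_coloring (hconn (Fin.last j))
        · intro v
          exact le_trans ((Gs (Fin.last j)).degree_le_maxDegree v) hHDP
        · by_contra hno
          push_neg at hno
          have hreg : ∀ v, (Gs (Fin.last j)).degree v = (Gs (Fin.last j)).maxDegree := by
            intro v
            have h1 := hno v
            have h2 := (Gs (Fin.last j)).degree_le_maxDegree v
            omega
          have h2d : 2 ≤ (Gs (Fin.last j)).maxDegree := by
            have := hno (Classical.arbitrary _)
            have := (Gs (Fin.last j)).degree_le_maxDegree (Classical.arbitrary _)
            omega
          obtain ⟨cH, hcH⟩ := hcolor (Fin.last j)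
          exact no_acyclic_coloring_of_regular h2d hreg hcH
      obtain ⟨cbox, hcbox⟩ := tf_exists hDPpos hIH (hcolor (Fin.last j)) hg
      -- transfer along the snoc isomorphism
      set e := finSnocEquiv U with he
      have hAdj : ∀ x y, (piBoxProd Gs).Adj x y ↔
          ((piBoxProd Gs') □ Gs (Fin.last j)).Adj (e x) (e y) := by
        intro x y
        rw [boxProd_adj]
        constructor
        · rintro ⟨i, hadj, hrest⟩
          induction i using Fin.lastCases with
          | last =>
            right
            refine ⟨hadj, ?_⟩
            funext i'
            exact hrest i'.castSucc (Fin.castSucc_lt_last i').ne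
          | cast i' =>
            left
            refine ⟨⟨i', hadj, fun j' hj' => hrest j'.castSucc
              (fun hcc => hj' (Fin.castSucc_injective _ hcc))⟩, ?_⟩
            exact hrest (Fin.last j) (Fin.castSucc_lt_last i').ne'
        · rintro (⟨⟨i', hadj, hrest⟩, hlast⟩ | ⟨hadj, heqf⟩)
          · refine ⟨i'.castSucc, hadj, ?_⟩
            intro j0 hj0
            induction j0 using Fin.lastCases with
            | last => exact hlast
            | cast j0' =>
              exact hrest j0' (fun hj => hj0 (by rw [hj]))
          · refine ⟨Fin.last j, hadj, ?_⟩
            intro j0 hj0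
            obtain ⟨j0', rfl⟩ := Fin.exists_castSucc_eq.mpr hj0
            exact congrFun heqf j0'
      have hcA := isAcyclicEdgeColoring_of_iso e hAdj hcbox
      have hsum : (∑ i, (Gs' i).maxDegree) + (Gs (Fin.last j)).maxDegree = ∑ i, (Gs i).maxDegree := by
        rw [Fin.sum_univ_castSucc (f := fun i => (Gs i).maxDegree)]
      exact ⟨_, isAcyclicEdgeColoring_equiv hcA (finCongr hsum)⟩

/-- If `G₁, …, G_k` are connected nontrivial finite graphs with `a'(Gᵢ) = Δ(Gᵢ)` for
each `i` and `max_i a'(Gᵢ) > 1`, then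
`a'(G₁ □ ⋯ □ G_k) = Δ(G₁ □ ⋯ □ G_k) = Δ(G₁) + ⋯ + Δ(G_k)`. -/
theorem acyclicChromaticIndex_piBoxProd {k : ℕ} (hk : 0 < k) {V : Fin k → Type*}
    [∀ i, Fintype (V i)] [∀ i, Nontrivial (V i)] (G : ∀ i, SimpleGraph (V i))
    [∀ i, DecidableRel (G i).Adj] (hconn : ∀ i, (G i).Connected)
    (heq : ∀ i, acyclicChromaticIndex (G i) = (G i).maxDegree)
    (hmax : ∃ i, 1 < acyclicChromaticIndex (G i)) :
    acyclicChromaticIndex (piBoxProd G) =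
        @SimpleGraph.maxDegree _ (piBoxProd G) _ (Classical.decRel _) ∧
      @SimpleGraph.maxDegree _ (piBoxProd G) _ (Classical.decRel _) =
        ∑ i, (G i).maxDegree := by
  classical
  haveI : ∀ i, Nonempty (V i) := fun i => inferInstance
  have hone : ∀ i, 1 ≤ (G i).maxDegree := fun i => one_le_maxDegree_of_connected (hconn i)
  obtain ⟨imax, -, hmaxall⟩ := Finset.exists_max_image (Finset.univ : Finset (Fin k))
    (fun i => (G i).maxDegree) ⟨⟨0, hk⟩, Finset.mem_univ _⟩
  have h2 : 2 ≤ (G imax).maxDegree := by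
    obtain ⟨i2, hi2⟩ := hmax
    have ha := heq i2
    have hb := hmaxall i2 (Finset.mem_univ _)
    omega
  have hcolor : ∀ i, ∃ c : Sym2 (V i) → Fin ((G i).maxDegree),
      IsAcyclicEdgeColoring (G i) c :=
    fun i => exists_coloring_of_aci_eq (heq i) (hone i)
  set σ := Equiv.swap (⟨0, hk⟩ : Fin k) imax with hσ
  have hs0 : σ ⟨0, hk⟩ = imax := Equiv.swap_apply_left _ _
  have htwo' : 2 ≤ (G (σ ⟨0, hk⟩)).maxDegree := by rw [hs0]; exact h2
  have hmaxle' : ∀ i, (G (σ i)).maxDegree ≤ (G (σ ⟨0, hk⟩)).maxDegree := by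
    intro i
    rw [hs0]
    exact hmaxall _ (Finset.mem_univ _)
  obtain ⟨cP, hcP⟩ := ind_main k hk (fun i => V (σ i)) (fun i => G (σ i))
    (fun i => hconn _) (fun i => hone _) hmaxle' htwo' (fun i => hcolor _)
  let e : (∀ i, V i) ≃ (∀ i, V (σ i)) := Equiv.piCongrLeft' V σ.symm
  have hAdj : ∀ x y, (piBoxProd G).Adj x y ↔
      (piBoxProd (fun i => G (σ i))).Adj (e x) (e y) := by
    intro x y
    constructor
    · rintro ⟨i, hadj, hrest⟩
      refine ⟨σ.symm i, ?_, ?_⟩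
      · show (G (σ (σ.symm i))).Adj (x (σ (σ.symm i))) (y (σ (σ.symm i)))
        rw [Equiv.apply_symm_apply]
        exact hadj
      · intro j hj
        show x (σ j) = y (σ j)
        refine hrest (σ j) ?_
        intro hh
        exact hj (by rw [← hh, Equiv.symm_apply_apply])
    · rintro ⟨i, hadj, hrest⟩
      refine ⟨σ i, hadj, ?_⟩
      intro j hj
      have hr := hrest (σ.symm j) (fun hh => hj (by rw [← hh, Equiv.apply_symm_apply]))
      have hr' : x (σ (σ.symm j)) = y (σ (σ.symm j)) := hr
      rw [Equiv.apply_symm_apply] at hr'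
      exact hr'
  have hcA := isAcyclicEdgeColoring_of_iso e hAdj hcP
  have hsum : (∑ i, (G (σ i)).maxDegree) = ∑ i, (G i).maxDegree :=
    Equiv.sum_comp σ (fun i => (G i).maxDegree)
  have hcFinal : ∃ c : Sym2 (∀ i, V i) → Fin (∑ i, (G i).maxDegree),
      IsAcyclicEdgeColoring (piBoxProd G) c :=
    ⟨_, isAcyclicEdgeColoring_equiv hcA (finCongr hsum)⟩
  have hmd : @SimpleGraph.maxDegree _ (piBoxProd G) _ (Classical.decRel _) =
      ∑ i, (G i).maxDegree := piBoxProd_maxDegree (inst := Classical.decRel _) G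
  constructor
  · apply le_antisymm
    · calc acyclicChromaticIndex (piBoxProd G) ≤ ∑ i, (G i).maxDegree :=
            Nat.sInf_le hcFinal
        _ = _ := hmd.symm
    · refine le_csInf ⟨_, hcFinal⟩ ?_
      rintro n ⟨c, hc⟩
      exact maxDegree_le_of_proper (inst := Classical.decRel _) hc.1
  · exact hmd
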